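/- Let A be a locally finite hyperplane arrangement in ℝⁿ, x₀ a generic point, and for each chamber C let x_C = proj_C(x₀) and F_C the smallest face of C containing x_C. If ≺ is any Euclidean order with base point x₀ (a total order on chambers such that C ≺ C' implies dist(x₀,C) ≤ dist(x₀,C')), then for every chamber C, the ideal J(C) = { X ∈ L(A) : supp(X) ∩ s(C,C') ≠ ∅ for all C' ≺ C } is the principal upper ideal of the intersection poset generated by X_C = |F_C|. In particular every Euclidean order is valid. -/

import Mathlib

open Metric Set MeasureTheory

noncomputable section

/-- A locally finite arrangement of affine hyperplanes in ℝⁿ, given by affine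
equations `⟪a i, x⟫ = b i` with `a i ≠ 0`, indexed injectively by `ι`. -/
structure Arrangement (n : ℕ) (ι : Type) where
  a : ι → EuclideanSpace ℝ (Fin n)
  b : ι → ℝ
  ha : ∀ i, a i ≠ 0
  inj : Function.Injective fun i => {x : EuclideanSpace ℝ (Fin n) | (inner ℝ (a i) x : ℝ) = b i}
  locFin : ∀ x : EuclideanSpace ℝ (Fin n), ∃ ε > 0,
    {i : ι | ∃ y ∈ Metric.ball x ε, (inner ℝ (a i) y : ℝ) = b i}.Finite

namespace Arrangement

variable {n : ℕ} {ι : Type} (A : Arrangement n ι)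

/-- The defining affine functional of the `i`-th hyperplane. -/
def val (i : ι) (x : EuclideanSpace ℝ (Fin n)) : ℝ := (inner ℝ (A.a i) x : ℝ) - A.b i

/-- The `i`-th hyperplane. -/
def hyperplane (i : ι) : Set (EuclideanSpace ℝ (Fin n)) := {x | A.val i x = 0}

/-- The sign vector of a point. -/
def signAt (x : EuclideanSpace ℝ (Fin n)) : ι → SignType := fun i => SignType.sign (A.val i x)

/-- The (relatively open) stratum with sign vector `σ`. -/
def openCell (σ : ι → SignType) : Set (EuclideanSpace ℝ (Fin n)) :=
  {x | ∀ i, SignType.sign (A.val i x) = σ i}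

/-- The (closed) faces of the arrangement: closures of the strata. -/
def IsFace (F : Set (EuclideanSpace ℝ (Fin n))) : Prop :=
  ∃ x : EuclideanSpace ℝ (Fin n), F = closure (A.openCell (A.signAt x))

/-- Chambers: closed faces of codimension 0. -/
def IsChamber (C : Set (EuclideanSpace ℝ (Fin n))) : Prop :=
  ∃ x : EuclideanSpace ℝ (Fin n), (∀ i, A.val i x ≠ 0) ∧
    C = closure (A.openCell (A.signAt x))

/-- The support of a subset: the hyperplanes containing it. -/
def supp (U : Set (EuclideanSpace ℝ (Fin n))) : Set ι := {i | U ⊆ A.hyperplane i}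

/-- The set of hyperplanes separating two chambers. -/
def sep (C C' : Set (EuclideanSpace ℝ (Fin n))) : Set ι :=
  {i | ∀ x ∈ interior C, ∀ y ∈ interior C', A.val i x * A.val i y < 0}

/-- `F` is a face of the chamber (or face) `C`. -/
def IsFaceOf (F C : Set (EuclideanSpace ℝ (Fin n))) : Prop := A.IsFace F ∧ F ⊆ C

/-- `A.IsCF C F D` means `D = C.F`: `D` is the unique chamber containing `F` and not
separated from `C` by any hyperplane of `supp F`. -/
def IsCF (C F D : Set (EuclideanSpace ℝ (Fin n))) : Prop :=
  A.IsChamber D ∧ F ⊆ D ∧ A.sep C D ∩ A.supp F = ∅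

/-- `A.IsOpp D F E` means `E = D^F`: `E` is the chamber opposite to `D` with respect to
its face `F`, i.e. the hyperplanes separating `D` and `E` are exactly those containing `F`. -/
def IsOpp (D F E : Set (EuclideanSpace ℝ (Fin n))) : Prop :=
  A.IsChamber E ∧ F ⊆ E ∧ A.sep D E = A.supp F

/-- Flats: nonempty intersections of subfamilies of hyperplanes (including ℝⁿ itself). -/
def IsFlat (X : Set (EuclideanSpace ℝ (Fin n))) : Prop :=
  X.Nonempty ∧ ∃ s : Set ι, X = ⋂ i ∈ s, A.hyperplane i

/-- A cell `⟨C, F⟩` of the Salvetti complex: a chamber `C` together with a face `F` of `C`. -/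
structure Cell {n : ℕ} {ι : Type} (𝒜 : Arrangement n ι) where
  C : Set (EuclideanSpace ℝ (Fin n))
  F : Set (EuclideanSpace ℝ (Fin n))
  isChamber : 𝒜.IsChamber C
  isFace : 𝒜.IsFace F
  faceLe : F ⊆ C

/-- The Salvetti order: `⟨C,F⟩ ≤ ⟨D,G⟩` iff `F ⪯ G` (i.e. `F ⊇ G`) and `D.F = C`. -/
def cellLE (c d : A.Cell) : Prop := d.F ⊆ c.F ∧ A.IsCF d.C c.F c.C

/-- The subcomplex `S(C)`: cells `⟨D,F⟩` with `D = C.F`. -/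
def inS (C : Set (EuclideanSpace ℝ (Fin n))) (c : A.Cell) : Prop := A.IsCF C c.F c.C

/-- A strict total order on the chambers. -/
def IsChamberOrder (lt : Set (EuclideanSpace ℝ (Fin n)) → Set (EuclideanSpace ℝ (Fin n)) → Prop) :
    Prop :=
  (∀ C C', A.IsChamber C → A.IsChamber C' → C ≠ C' → lt C C' ∨ lt C' C) ∧
  (∀ C, ¬ lt C C) ∧
  (∀ C C' C'', lt C C' → lt C' C'' → lt C C'')

/-- The upper ideal `J(C)` of the poset of flats determined by a total order on chambers. -/
def J (lt : Set (EuclideanSpace ℝ (Fin n)) → Set (EuclideanSpace ℝ (Fin n)) → Prop)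
    (C : Set (EuclideanSpace ℝ (Fin n))) : Set (Set (EuclideanSpace ℝ (Fin n))) :=
  {X | A.IsFlat X ∧ ∀ C', A.IsChamber C' → lt C' C → (A.supp X ∩ A.sep C C').Nonempty}

/-- A valid order: for each chamber `C`, the ideal `J(C)` is the principal upper ideal
(in the poset of flats ordered by reverse inclusion) generated by `X_C = |F_C|` for some
face `F_C` of `C`. -/
def IsValidOrder
    (lt : Set (EuclideanSpace ℝ (Fin n)) → Set (EuclideanSpace ℝ (Fin n)) → Prop) : Prop :=
  A.IsChamberOrder lt ∧
  ∀ C, A.IsChamber C → ∃ F_C, A.IsFaceOf F_C C ∧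
    A.J lt C = {X | A.IsFlat X ∧ X ⊆ (affineSpan ℝ F_C : Set (EuclideanSpace ℝ (Fin n)))}

/-- Membership in `N(C)`: cells of `S(C)` not lying in any earlier `S(C')`. -/
def inN (lt : Set (EuclideanSpace ℝ (Fin n)) → Set (EuclideanSpace ℝ (Fin n)) → Prop)
    (C : Set (EuclideanSpace ℝ (Fin n))) (c : A.Cell) : Prop :=
  A.inS C c ∧ ∀ C', A.IsChamber C' → lt C' C → ¬ A.inS C' c

/-- A point `x₀` is generic with respect to `A`: (i) chambers at equal distance from `x₀`
have the same metric projection of `x₀`, lying in their intersection; (ii) distances to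
strictly comparable flats are strictly comparable. -/
def IsGeneric (x₀ : EuclideanSpace ℝ (Fin n)) : Prop :=
  (∀ C C', A.IsChamber C → A.IsChamber C' → infDist x₀ C = infDist x₀ C' →
    ∀ p ∈ C, ∀ p' ∈ C', (∀ q ∈ C, dist x₀ p ≤ dist x₀ q) →
      (∀ q ∈ C', dist x₀ p' ≤ dist x₀ q) → p = p' ∧ p ∈ C ∩ C') ∧
  (∀ L L', A.IsFlat L → A.IsFlat L' → L' ⊂ L → infDist x₀ L < infDist x₀ L')

end Arrangement

namespace Arrangement



variable {n : ℕ} {ι : Type} (A : Arrangement n ι)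

lemma st_cases {s : SignType} (hs : s ≠ 0) : (s : ℝ) = 1 ∨ (s : ℝ) = -1 := by
  cases s <;> simp_all

lemma st_ne_zero {s : SignType} (hs : s ≠ 0) : (s : ℝ) ≠ 0 := by
  rcases st_cases hs with h | h <;> rw [h] <;> norm_num

lemma st_mul_self {s : SignType} (hs : s ≠ 0) : (s : ℝ) * s = 1 := by
  cases s <;> simp_all

lemma st_opp {s t : SignType} (h : (s : ℝ) * t < 0) : (t : ℝ) = -(s : ℝ) := by
  cases s <;> cases t <;> simp_all <;> norm_num at h

lemma st_eq_of_not_opp {s t : SignType} (hs : s ≠ 0) (ht : t ≠ 0) (h : (t : ℝ) ≠ -(s : ℝ)) :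
    (t : ℝ) = s := by
  cases s <;> cases t <;> simp_all <;> norm_num at h

lemma st_inj {s t : SignType} (h : (s : ℝ) = t) : s = t := by
  cases s <;> cases t <;> simp_all <;> norm_num at h

lemma sign_iff {s : SignType} (hs : s ≠ 0) (r : ℝ) :
    SignType.sign r = s ↔ 0 < (s : ℝ) * r := by
  cases s with
  | zero => simp at hs
  | neg =>
      rw [show (SignType.neg : SignType) = -1 from rfl, sign_eq_neg_one_iff]
      constructor <;> intro h
      · simp; linarith
      · simp at h; linarith
  | pos =>
      rw [show (SignType.pos : SignType) = 1 from rfl, sign_eq_one_iff]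
      constructor <;> intro h
      · simpa using h
      · simpa using h

lemma sign_mul_self_pos {r : ℝ} (h : r ≠ 0) : 0 < (SignType.sign r : ℝ) * r := by
  rcases lt_or_gt_of_ne h with h' | h'
  · rw [sign_eq_neg_one_iff.2 h']; norm_num; linarith
  · rw [sign_eq_one_iff.2 h']; norm_num; linarith

lemma val_add_smul (i : ι) (x w : EuclideanSpace ℝ (Fin n)) (t : ℝ) :
    A.val i (x + t • w) = A.val i x + t * (inner ℝ (A.a i) w : ℝ) := by
  simp only [Arrangement.val, inner_add_right, real_inner_smul_right]
  ring

lemma inner_eq_val_sub (i : ι) (x y : EuclideanSpace ℝ (Fin n)) :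
    (inner ℝ (A.a i) (x - y) : ℝ) = A.val i x - A.val i y := by
  simp only [Arrangement.val, inner_sub_right]
  ring

lemma val_cont (i : ι) : Continuous (A.val i) :=
  (continuous_const.inner continuous_id').sub continuous_const

/-- The workhorse local-finiteness lemma: strict sign conditions that hold at a point
hold on a ball around it. -/
lemma ball_pos (W : Set ι) (σ : ι → SignType) (q : EuclideanSpace ℝ (Fin n))
    (h : ∀ i ∈ W, 0 < (σ i : ℝ) * A.val i q) :
    ∃ r > 0, ∀ x ∈ Metric.ball q r, ∀ i ∈ W, 0 < (σ i : ℝ) * A.val i x := by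
  obtain ⟨ε, εpos, hfin⟩ := A.locFin q
  set I₀ : Set ι := {i : ι | ∃ y ∈ Metric.ball q ε, (inner ℝ (A.a i) y : ℝ) = A.b i} with hI₀
  have hmemI₀ : ∀ (i : ι) (y : EuclideanSpace ℝ (Fin n)),
      y ∈ Metric.ball q ε → A.val i y = 0 → i ∈ I₀ := by
    intro i y hy hv
    exact ⟨y, hy, by simpa [Arrangement.val, sub_eq_zero] using hv⟩
  set V : Set (EuclideanSpace ℝ (Fin n)) :=
    Metric.ball q ε ∩ ⋂ i ∈ I₀ ∩ W, {x | 0 < (σ i : ℝ) * A.val i x} with hV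
  have hVopen : IsOpen V := by
    refine Metric.isOpen_ball.inter ?_
    refine Set.Finite.isOpen_biInter (hfin.subset Set.inter_subset_left) ?_
    intro i _
    exact isOpen_lt continuous_const (continuous_const.mul (A.val_cont i))
  have hqV : q ∈ V := by
    refine ⟨Metric.mem_ball_self εpos, ?_⟩
    simp only [Set.mem_iInter]
    intro i hi
    exact h i hi.2
  obtain ⟨r, rpos, hball⟩ := Metric.isOpen_iff.1 hVopen q hqV
  refine ⟨r, rpos, ?_⟩
  intro x hx i hiW
  by_cases hiI : i ∈ I₀
  · have hmem := (hball hx).2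
    simp only [Set.mem_iInter] at hmem
    exact hmem i ⟨hiI, hiW⟩
  · by_contra hle
    push_neg at hle
    have hxε : x ∈ Metric.ball q ε := (hball hx).1
    have hσ0 : σ i ≠ 0 := by
      intro h0
      have := h i hiW; rw [h0] at this; simp at this
    rcases eq_or_lt_of_le hle with heq | hlt'
    · have hvx : A.val i x = 0 := by
        rcases mul_eq_zero.1 heq with h1 | h1
        · exact absurd h1 (st_ne_zero hσ0)
        · exact h1
      exact hiI (hmemI₀ i x hxε hvx)
    · set c : ℝ := A.val i x with hc
      set cq : ℝ := A.val i q with hcq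
      have hcneg : (σ i : ℝ) * c < 0 := hlt'
      have hcqpos : 0 < (σ i : ℝ) * cq := h i hiW
      have hden : (σ i : ℝ) * (c - cq) < 0 := by rw [mul_sub]; linarith
      set t : ℝ := c / (c - cq) with ht
      have hrw : t = ((σ i : ℝ) * c) / ((σ i : ℝ) * (c - cq)) := by
        rw [mul_div_mul_left _ _ (st_ne_zero hσ0)]
      have ht0 : 0 < t := by
        rw [hrw]; exact div_pos_of_neg_of_neg hcneg hden
      have ht1 : t < 1 := by
        rw [hrw, div_lt_one_of_neg hden]
        rw [mul_sub]; linarith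
      set z : EuclideanSpace ℝ (Fin n) := x + t • (q - x) with hz
      have hzball : z ∈ Metric.ball q ε := by
        have h1 : z = (1 - t) • x + t • q := by
          rw [hz, smul_sub, sub_smul, one_smul]; abel
        rw [h1]
        exact (convex_ball q ε) hxε (Metric.mem_ball_self εpos) (by linarith) (le_of_lt ht0)
          (by ring)
      have hzval : A.val i z = 0 := by
        rw [hz, A.val_add_smul, A.inner_eq_val_sub, ← hc, ← hcq, ht]
        have : c - cq ≠ 0 := fun h0 => by rw [h0, mul_zero] at hden; exact lt_irrefl 0 hden
        field_simp
        ring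
      exact hiI (hmemI₀ i z hzball hzval)

/-- Strict-sign description of an open cell. -/
lemma cell_eq {σ : ι → SignType} (hσ : ∀ i, σ i ≠ 0) :
    A.openCell σ = {z | ∀ i, 0 < (σ i : ℝ) * A.val i z} := by
  ext z
  simp only [Arrangement.openCell, Set.mem_setOf_eq]
  exact forall_congr' fun i => sign_iff (hσ i) _

lemma closed_weak (s : Set ι) (σ : ι → SignType) :
    IsClosed {z : EuclideanSpace ℝ (Fin n) | ∀ i ∈ s, 0 ≤ (σ i : ℝ) * A.val i z} := by
  have hset : {z : EuclideanSpace ℝ (Fin n) | ∀ i ∈ s, 0 ≤ (σ i : ℝ) * A.val i z} =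
      ⋂ i ∈ s, {z | 0 ≤ (σ i : ℝ) * A.val i z} := by
    ext z; simp
  rw [hset]
  exact isClosed_biInter fun i _ =>
    isClosed_le continuous_const (continuous_const.mul (A.val_cont i))

/-- Closure of a full-dimensional cell. -/
lemma cell_closure {σ : ι → SignType} (x : EuclideanSpace ℝ (Fin n))
    (hx : ∀ i, 0 < (σ i : ℝ) * A.val i x) :
    closure (A.openCell σ) = {z | ∀ i, 0 ≤ (σ i : ℝ) * A.val i z} := by
  have hσ : ∀ i, σ i ≠ 0 := by
    intro i h0
    have := hx i; rw [h0] at this; simp at this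
  rw [A.cell_eq hσ]
  apply subset_antisymm
  · refine closure_minimal (fun z hz i => le_of_lt (hz i)) ?_
    have h := A.closed_weak Set.univ σ
    simpa using h
  · intro z hz
    have htd : Filter.Tendsto (fun t : ℝ => z + t • (x - z)) (nhdsWithin 0 (Set.Ioi 0))
        (nhds z) := by
      have hcont : Continuous (fun t : ℝ => z + t • (x - z)) := by continuity
      have h0 := hcont.tendsto 0
      simp only [zero_smul, add_zero] at h0
      exact h0.mono_left nhdsWithin_le_nhds
    refine mem_closure_of_tendsto htd ?_
    have hIoo : Set.Ioo (0:ℝ) 1 ∈ nhdsWithin (0:ℝ) (Set.Ioi 0) :=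
      Ioo_mem_nhdsGT_of_mem ⟨le_refl _, zero_lt_one⟩
    refine Filter.eventually_of_mem hIoo fun t ht => ?_
    show ∀ i, 0 < (σ i : ℝ) * A.val i (z + t • (x - z))
    intro i
    have hval : (σ i : ℝ) * A.val i (z + t • (x - z)) =
        (1 - t) * ((σ i : ℝ) * A.val i z) + t * ((σ i : ℝ) * A.val i x) := by
      rw [A.val_add_smul, A.inner_eq_val_sub]; ring
    rw [hval]
    have h1 : 0 ≤ (1 - t) * ((σ i : ℝ) * A.val i z) :=
      mul_nonneg (by linarith [ht.2]) (hz i)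
    have h2 : 0 < t * ((σ i : ℝ) * A.val i x) := mul_pos ht.1 (hx i)
    linarith

/-- Points of the interior of a chamber satisfy all sign conditions strictly. -/
lemma interior_strict {σ : ι → SignType} (x : EuclideanSpace ℝ (Fin n))
    (hx : ∀ i, 0 < (σ i : ℝ) * A.val i x) :
    ∀ z ∈ interior (closure (A.openCell σ)), ∀ i, 0 < (σ i : ℝ) * A.val i z := by
  intro z hz i
  have hσi : σ i ≠ 0 := by
    intro h0; have := hx i; rw [h0] at this; simp at this
  obtain ⟨δ, δpos, hball⟩ := Metric.isOpen_iff.1 isOpen_interior z hz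
  have hsub : Metric.ball z δ ⊆ {w | ∀ j, 0 ≤ (σ j : ℝ) * A.val j w} := by
    intro w hw
    have hmem := interior_subset (hball hw)
    rwa [A.cell_closure x hx] at hmem
  have hnapos : 0 < ‖A.a i‖ := norm_pos_iff.2 (A.ha i)
  set c : ℝ := -(σ i : ℝ) * (δ / (2 * ‖A.a i‖)) with hcdef
  set w : EuclideanSpace ℝ (Fin n) := z + c • A.a i with hwdef
  have hwball : w ∈ Metric.ball z δ := by
    rw [hwdef, Metric.mem_ball, dist_eq_norm]
    have he : z + c • A.a i - z = c • A.a i := by abel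
    rw [he, norm_smul, Real.norm_eq_abs]
    have habs : |c| = δ / (2 * ‖A.a i‖) := by
      rw [hcdef, abs_mul, abs_neg]
      have h2 : |δ / (2 * ‖A.a i‖)| = δ / (2 * ‖A.a i‖) :=
        abs_of_pos (by positivity)
      rcases st_cases hσi with h | h <;> rw [h] <;> simp [h2]
    rw [habs]
    have heq2 : δ / (2 * ‖A.a i‖) * ‖A.a i‖ = δ / 2 := by
      field_simp
    rw [heq2]
    linarith
  have hwmem := hsub hwball i
  have hinner : (inner ℝ (A.a i) (A.a i) : ℝ) = ‖A.a i‖ ^ 2 := real_inner_self_eq_norm_sq _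
  have hval : A.val i w = A.val i z + c * ‖A.a i‖ ^ 2 := by
    rw [hwdef]
    have h3 := A.val_add_smul i z (A.a i) c
    rw [h3, hinner]
  rw [hval, mul_add] at hwmem
  have hss : (σ i : ℝ) * (σ i : ℝ) = 1 := st_mul_self hσi
  have he2 : (σ i : ℝ) * (c * ‖A.a i‖ ^ 2) = -(δ / (2 * ‖A.a i‖) * ‖A.a i‖ ^ 2) := by
    rw [hcdef]
    linear_combination (-(δ / (2 * ‖A.a i‖) * ‖A.a i‖ ^ 2)) * hss
  rw [he2] at hwmem
  have hpos : 0 < δ / (2 * ‖A.a i‖) * ‖A.a i‖ ^ 2 := by positivity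
  linarith

/-- Characterization of separating hyperplanes by sign vectors. -/
lemma sep_char {σ σ' : ι → SignType} (x x' : EuclideanSpace ℝ (Fin n))
    (hx : ∀ i, 0 < (σ i : ℝ) * A.val i x) (hx' : ∀ i, 0 < (σ' i : ℝ) * A.val i x') (i : ι) :
    i ∈ A.sep (closure (A.openCell σ)) (closure (A.openCell σ')) ↔ (σ' i : ℝ) = -(σ i : ℝ) := by
  have hσ : ∀ j, σ j ≠ 0 := fun j h0 => by have := hx j; rw [h0] at this; simp at this
  have hσ' : ∀ j, σ' j ≠ 0 := fun j h0 => by have := hx' j; rw [h0] at this; simp at this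
  constructor
  · intro hsep
    obtain ⟨r, rpos, hr⟩ := A.ball_pos Set.univ σ x (fun j _ => hx j)
    obtain ⟨r', r'pos, hr'⟩ := A.ball_pos Set.univ σ' x' (fun j _ => hx' j)
    have hxint : x ∈ interior (closure (A.openCell σ)) := by
      rw [mem_interior]
      refine ⟨Metric.ball x r, ?_, Metric.isOpen_ball, Metric.mem_ball_self rpos⟩
      intro w hw
      apply subset_closure
      rw [A.cell_eq hσ]
      exact fun j => hr w hw j trivial
    have hx'int : x' ∈ interior (closure (A.openCell σ')) := by
      rw [mem_interior]
      refine ⟨Metric.ball x' r', ?_, Metric.isOpen_ball, Metric.mem_ball_self r'pos⟩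
      intro w hw
      apply subset_closure
      rw [A.cell_eq hσ']
      exact fun j => hr' w hw j trivial
    have hprod := hsep x hxint x' hx'int
    have h1 := hx i
    have h2 := hx' i
    apply st_opp
    nlinarith
  · intro hopp xi hxi yi hyi
    have h1 := A.interior_strict x hx xi hxi i
    have h2 := A.interior_strict x' hx' yi hyi i
    have hss : (σ i : ℝ) * (σ i : ℝ) = 1 := st_mul_self (hσ i)
    rw [hopp] at h2
    nlinarith

/-- The variational inequality for approximate projections. -/
lemma var_ineq {v w : EuclideanSpace ℝ (Fin n)} {δ : ℝ} (hδ : 0 < δ)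
    (h : ∀ t : ℝ, 0 < t → t ≤ δ → ‖v‖ ≤ ‖v - t • w‖) : (inner ℝ v w : ℝ) ≤ 0 := by
  by_contra hc
  push_neg at hc
  set ip : ℝ := (inner ℝ v w : ℝ) with hip
  set t : ℝ := min δ (ip / (‖w‖ ^ 2 + 1)) with htdef
  have htpos : 0 < t := lt_min hδ (by positivity)
  have htle : t ≤ δ := min_le_left _ _
  have hkey := h t htpos htle
  have hsq : ‖v - t • w‖ ^ 2 = ‖v‖ ^ 2 - 2 * (t * ip) + t ^ 2 * ‖w‖ ^ 2 := by
    rw [norm_sub_sq_real, real_inner_smul_right, norm_smul, Real.norm_eq_abs,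
      abs_of_pos htpos, mul_pow]
  have hsmall : t * ‖w‖ ^ 2 < 2 * ip := by
    have h1 : t ≤ ip / (‖w‖ ^ 2 + 1) := min_le_right _ _
    have h2 : t * ‖w‖ ^ 2 ≤ ip / (‖w‖ ^ 2 + 1) * ‖w‖ ^ 2 :=
      mul_le_mul_of_nonneg_right h1 (by positivity)
    have h3 : ip / (‖w‖ ^ 2 + 1) * ‖w‖ ^ 2 < ip := by
      rw [div_mul_eq_mul_div, div_lt_iff₀ (by positivity)]
      nlinarith
    linarith
  have hnn : 0 ≤ ‖v‖ := norm_nonneg v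
  have hnn2 : 0 ≤ ‖v - t • w‖ := norm_nonneg _
  nlinarith [hkey]

lemma dense_ne (s : Set ι) (hs : s.Finite) :
    Dense {x : EuclideanSpace ℝ (Fin n) | ∀ i ∈ s, A.val i x ≠ 0} := by
  have hd : ∀ i : ι, Dense {x : EuclideanSpace ℝ (Fin n) | A.val i x ≠ 0} := by
    intro i
    rw [Metric.dense_iff]
    intro x r hr
    by_cases hx : A.val i x ≠ 0
    · exact ⟨x, Metric.mem_ball_self hr, hx⟩
    · push_neg at hx
      have hnapos : 0 < ‖A.a i‖ := norm_pos_iff.2 (A.ha i)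
      refine ⟨x + (r / (2 * ‖A.a i‖)) • A.a i, ?_, ?_⟩
      · rw [Metric.mem_ball, dist_eq_norm]
        have he : x + (r / (2 * ‖A.a i‖)) • A.a i - x = (r / (2 * ‖A.a i‖)) • A.a i := by abel
        rw [he, norm_smul, Real.norm_eq_abs, abs_of_pos (by positivity)]
        have heq2 : r / (2 * ‖A.a i‖) * ‖A.a i‖ = r / 2 := by
          field_simp
        rw [heq2]
        linarith
      · rw [Set.mem_setOf_eq, A.val_add_smul, real_inner_self_eq_norm_sq, hx, zero_add]
        positivity
  have hopen : ∀ i : ι, IsOpen {x : EuclideanSpace ℝ (Fin n) | A.val i x ≠ 0} := by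
    intro i
    exact isOpen_compl_iff.2 (isClosed_eq (A.val_cont i) continuous_const)
  refine Set.Finite.induction_on
    (motive := fun s _ => Dense {x : EuclideanSpace ℝ (Fin n) | ∀ i ∈ s, A.val i x ≠ 0}) s hs ?_ ?_
  · simpa using dense_univ
  · intro i s _ _ ih
    have hset : {x : EuclideanSpace ℝ (Fin n) | ∀ j ∈ insert i s, A.val j x ≠ 0} =
        {x | A.val i x ≠ 0} ∩ {x | ∀ j ∈ s, A.val j x ≠ 0} := by
      ext x
      simp only [Set.mem_insert_iff, Set.mem_inter_iff, Set.mem_setOf_eq]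
      constructor
      · intro hx; exact ⟨hx i (Or.inl rfl), fun j hj => hx j (Or.inr hj)⟩
      · rintro ⟨h1, h2⟩ j (rfl | hj)
        · exact h1
        · exact h2 j hj
    rw [hset]
    exact Dense.inter_of_isOpen_left (hd i) ih (hopen i)

lemma div_bound {r c : ℝ} (hr : 0 < r) (hc : 0 ≤ c) : r / (2 * (c + 1)) * c < r := by
  rw [div_mul_eq_mul_div, div_lt_iff₀ (by positivity)]
  nlinarith

lemma le_infDist' {s : Set (EuclideanSpace ℝ (Fin n))} (hs : s.Nonempty)
    {x : EuclideanSpace ℝ (Fin n)} {b : ℝ} (h : ∀ y ∈ s, b ≤ dist x y) :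
    b ≤ Metric.infDist x s := by
  by_contra hc
  push_neg at hc
  obtain ⟨y, hy, hlt⟩ := (Metric.infDist_lt_iff hs).1 hc
  exact absurd (h y hy) (not_le.2 hlt)

lemma norm_le_of_sq {a b : ℝ} (ha : 0 ≤ a) (hb : 0 ≤ b) (h : a ^ 2 ≤ b ^ 2) : a ≤ b := by
  nlinarith

/-- The intersection of a family of hyperplanes as an affine subspace. -/
def flatAff (Z : Set ι) : AffineSubspace ℝ (EuclideanSpace ℝ (Fin n)) where
  carrier := {x | ∀ i ∈ Z, A.val i x = 0}
  smul_vsub_vadd_mem' := by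
    intro c p₁ p₂ p₃ h₁ h₂ h₃ i hi
    have h1 := h₁ i hi
    have h2 := h₂ i hi
    have h3 := h₃ i hi
    simp only [Arrangement.val] at h1 h2 h3 ⊢
    rw [vsub_eq_sub, vadd_eq_add, inner_add_right, real_inner_smul_right, inner_sub_right]
    have hb1 : (inner ℝ (A.a i) p₁ : ℝ) = A.b i := by linarith
    have hb2 : (inner ℝ (A.a i) p₂ : ℝ) = A.b i := by linarith
    have hb3 : (inner ℝ (A.a i) p₃ : ℝ) = A.b i := by linarith
    rw [hb1, hb2, hb3]
    ring

@[simp] lemma mem_flatAff {Z : Set ι} {x : EuclideanSpace ℝ (Fin n)} :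
    x ∈ A.flatAff Z ↔ ∀ i ∈ Z, A.val i x = 0 := Iff.rfl

lemma flatAff_eq_biInter (Z : Set ι) :
    (A.flatAff Z : Set (EuclideanSpace ℝ (Fin n))) = ⋂ i ∈ Z, A.hyperplane i := by
  ext x
  simp only [Set.mem_iInter]
  exact Iff.rfl

end Arrangement

open Arrangement


/-- Every Euclidean order is valid: for a generic base point `x₀` and a total order on
chambers compatible with the distance from `x₀`, the ideal `J(C)` is the principal upper
ideal generated by `X_C = |F_C|`, where `F_C` is the smallest face of `C` containing the
projection of `x₀` onto `C`. -/
theorem stmt13 {n : ℕ} {ι : Type} (A : Arrangement n ι)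
    (x₀ : EuclideanSpace ℝ (Fin n)) (hgen : A.IsGeneric x₀)
    (lt : Set (EuclideanSpace ℝ (Fin n)) → Set (EuclideanSpace ℝ (Fin n)) → Prop)
    (hord : A.IsChamberOrder lt)
    (hcomp : ∀ C C', A.IsChamber C → A.IsChamber C' → lt C C' →
      infDist x₀ C ≤ infDist x₀ C')
    (C : Set (EuclideanSpace ℝ (Fin n))) (hC : A.IsChamber C)
    (x_C : EuclideanSpace ℝ (Fin n)) (hxC : x_C ∈ C)
    (hmin : ∀ q ∈ C, dist x₀ x_C ≤ dist x₀ q)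
    (F_C : Set (EuclideanSpace ℝ (Fin n))) (hFC : A.IsFaceOf F_C C) (hxF : x_C ∈ F_C)
    (hsmall : ∀ F, A.IsFaceOf F C → x_C ∈ F → F_C ⊆ F) :
    A.J lt C =
      {X | A.IsFlat X ∧ X ⊆ (affineSpan ℝ F_C : Set (EuclideanSpace ℝ (Fin n)))} := by
  classical
  obtain ⟨xw, hxw_ne, hCeq⟩ := id hC
  set σ : ι → SignType := A.signAt xw with hσdef
  have hxw_pos : ∀ i, 0 < (σ i : ℝ) * A.val i xw := fun i => sign_mul_self_pos (hxw_ne i)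
  have hσne : ∀ i, σ i ≠ 0 := by
    intro i h0
    have := hxw_pos i; rw [h0] at this; simp at this
  have hCset : C = {z | ∀ i, 0 ≤ (σ i : ℝ) * A.val i z} := by
    rw [hCeq]; exact A.cell_closure xw hxw_pos
  have hxCw : ∀ i, 0 ≤ (σ i : ℝ) * A.val i x_C := by rw [hCset] at hxC; exact hxC
  have hxC' : x_C ∈ C := by rw [hCset]; exact hxCw
  set Z : Set ι := {i | A.val i x_C = 0} with hZdef
  have hZpos : ∀ i, i ∉ Z → 0 < (σ i : ℝ) * A.val i x_C := by
    intro i hi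
    rcases lt_or_eq_of_le (hxCw i) with h | h
    · exact h
    · exfalso
      apply hi
      rcases mul_eq_zero.1 h.symm with h1 | h1
      · exact absurd h1 (st_ne_zero (hσne i))
      · exact h1
  have hdC : infDist x₀ C = dist x₀ x_C :=
    le_antisymm (infDist_le_dist_of_mem hxC') (le_infDist' ⟨x_C, hxC'⟩ hmin)
  have hypclosed : ∀ i, IsClosed (A.hyperplane i) :=
    fun i => isClosed_eq (A.val_cont i) continuous_const
  have hCclosed : IsClosed C := by rw [hCeq]; exact isClosed_closure
  -- the key distance bound for the cone K determined by Z
  have hK : ∀ q : EuclideanSpace ℝ (Fin n), (∀ i ∈ Z, 0 ≤ (σ i : ℝ) * A.val i q) →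
      dist x₀ x_C ≤ dist x₀ q := by
    intro q hq
    obtain ⟨r, rpos, hr⟩ := A.ball_pos Zᶜ σ x_C (fun i hi => hZpos i hi)
    set w : EuclideanSpace ℝ (Fin n) := q - x_C with hwdef
    set δ : ℝ := r / (2 * (‖w‖ + 1)) with hδdef
    have hδpos : 0 < δ := by positivity
    have hmem : ∀ t : ℝ, 0 < t → t ≤ δ → x_C + t • w ∈ C := by
      intro t ht0 htδ
      rw [hCset]
      intro i
      by_cases hiZ : i ∈ Z
      · have hz0 : A.val i x_C = 0 := hiZ
        have hrw : (σ i : ℝ) * A.val i (x_C + t • w) = t * ((σ i : ℝ) * A.val i q) := by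
          rw [A.val_add_smul, A.inner_eq_val_sub, hz0]; ring
        rw [hrw]
        exact mul_nonneg (le_of_lt ht0) (hq i hiZ)
      · have hball : x_C + t • w ∈ Metric.ball x_C r := by
          rw [Metric.mem_ball, dist_eq_norm]
          have he : x_C + t • w - x_C = t • w := by abel
          rw [he, norm_smul, Real.norm_eq_abs, abs_of_pos ht0]
          have h1 : t * ‖w‖ ≤ δ * ‖w‖ :=
            mul_le_mul_of_nonneg_right htδ (norm_nonneg _)
          have h2 : δ * ‖w‖ < r := by rw [hδdef]; exact div_bound rpos (norm_nonneg _)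
          linarith
        exact le_of_lt (hr _ hball i hiZ)
    have hinner : (inner ℝ (x₀ - x_C) w : ℝ) ≤ 0 := by
      apply var_ineq hδpos
      intro t ht0 htδ
      have h1 := hmin _ (hmem t ht0 htδ)
      rw [dist_eq_norm, dist_eq_norm] at h1
      have he : x₀ - (x_C + t • w) = x₀ - x_C - t • w := by abel
      rw [he] at h1
      exact h1
    rw [dist_eq_norm, dist_eq_norm]
    apply norm_le_of_sq (norm_nonneg _) (norm_nonneg _)
    have he : x₀ - q = x₀ - x_C - w := by rw [hwdef]; abel
    have hrhs : ‖x₀ - x_C - w‖ ^ 2 =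
        ‖x₀ - x_C‖ ^ 2 - 2 * (inner ℝ (x₀ - x_C) w : ℝ) + ‖w‖ ^ 2 := norm_sub_sq_real _ _
    rw [he, hrhs]
    nlinarith [sq_nonneg ‖w‖]
  -- identification of the affine span of F_C
  have hcellsub : A.openCell (A.signAt x_C) ⊆ C := by
    rw [hCset]
    intro z hz i
    have hzi : SignType.sign (A.val i z) = SignType.sign (A.val i x_C) := hz i
    by_cases hiZ : i ∈ Z
    · have hz0 : A.val i z = 0 := by
        rw [← sign_eq_zero_iff, hzi, sign_eq_zero_iff]; exact hiZ
      rw [hz0, mul_zero]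
    · have h1 := hZpos i hiZ
      have h2 : SignType.sign (A.val i x_C) = σ i := (sign_iff (hσne i) _).2 h1
      exact le_of_lt ((sign_iff (hσne i) _).1 (hzi.trans h2))
  have hFsub : F_C ⊆ closure (A.openCell (A.signAt x_C)) :=
    hsmall _ ⟨⟨x_C, rfl⟩, closure_minimal hcellsub hCclosed⟩
      (subset_closure (fun i => rfl))
  have hFC_Z : ∀ i ∈ Z, F_C ⊆ A.hyperplane i := by
    intro i hiZ
    refine hFsub.trans (closure_minimal ?_ (hypclosed i))
    intro z hz
    have hzi : SignType.sign (A.val i z) = SignType.sign (A.val i x_C) := hz i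
    show A.val i z = 0
    rw [← sign_eq_zero_iff, hzi, sign_eq_zero_iff]; exact hiZ
  have hspan_sub : (affineSpan ℝ F_C : Set (EuclideanSpace ℝ (Fin n))) ⊆
      {x | ∀ i ∈ Z, A.val i x = 0} := by
    have hle : affineSpan ℝ F_C ≤ A.flatAff Z :=
      affineSpan_le.2 (fun z hz i hiZ => hFC_Z i hiZ hz)
    exact fun x hx => hle hx
  have hspan_sup : {x | ∀ i ∈ Z, A.val i x = 0} ⊆
      (affineSpan ℝ F_C : Set (EuclideanSpace ℝ (Fin n))) := by
    obtain ⟨yF, hFeq⟩ := hFC.1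
    have hyF : yF ∈ F_C := hFeq ▸ subset_closure (fun i => rfl)
    have hyZ : ∀ i ∈ Z, A.val i yF = 0 := fun i hi => hFC_Z i hi hyF
    have hyNZ : ∀ i, i ∉ Z → A.val i yF ≠ 0 := by
      intro i hiZ h0
      apply hiZ
      have hFhi : F_C ⊆ A.hyperplane i := by
        rw [hFeq]
        refine closure_minimal ?_ (hypclosed i)
        intro z hz
        have hzi : SignType.sign (A.val i z) = SignType.sign (A.val i yF) := hz i
        show A.val i z = 0
        rw [← sign_eq_zero_iff, hzi, sign_eq_zero_iff]; exact h0
      exact hFhi hxF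
    obtain ⟨rF, rFpos, hrF⟩ := A.ball_pos Zᶜ (A.signAt yF) yF
      (fun i hi => sign_mul_self_pos (hyNZ i hi))
    intro z hz
    set w : EuclideanSpace ℝ (Fin n) := z - yF with hwdef
    set δ : ℝ := rF / (2 * (‖w‖ + 1)) with hδdef
    have hδpos : 0 < δ := by positivity
    have hy' : yF + δ • w ∈ F_C := by
      rw [hFeq]
      apply subset_closure
      intro i
      by_cases hiZ : i ∈ Z
      · have h1 : A.val i (yF + δ • w) = 0 := by
          rw [A.val_add_smul, A.inner_eq_val_sub]
          have h2 : A.val i z = 0 := hz i hiZ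
          rw [hyZ i hiZ, h2]; ring
        rw [h1, sign_zero]
        exact (sign_eq_zero_iff.2 (hyZ i hiZ)).symm
      · have hball : yF + δ • w ∈ Metric.ball yF rF := by
          rw [Metric.mem_ball, dist_eq_norm]
          have he : yF + δ • w - yF = δ • w := by abel
          rw [he, norm_smul, Real.norm_eq_abs, abs_of_pos hδpos]
          have h2 : δ * ‖w‖ < rF := by rw [hδdef]; exact div_bound rFpos (norm_nonneg _)
          exact h2
        have h2 := hrF _ hball i hiZ
        have hsne : A.signAt yF i ≠ 0 := fun h0 => hyNZ i hiZ (sign_eq_zero_iff.1 h0)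
        exact (sign_iff hsne _).2 h2
    have hz' : z = (1/δ) • ((yF + δ • w) -ᵥ yF) +ᵥ yF := by
      rw [vsub_eq_sub, vadd_eq_add]
      have he : yF + δ • w - yF = δ • w := by abel
      rw [he, smul_smul, one_div_mul_cancel (ne_of_gt hδpos), one_smul, hwdef]
      abel
    rw [hz']
    exact AffineSubspace.smul_vsub_vadd_mem _ _
      (subset_affineSpan ℝ F_C hy') (subset_affineSpan ℝ F_C hyF)
      (subset_affineSpan ℝ F_C hyF)
  -- now the two inclusions
  apply subset_antisymm
  · -- J(C) ⊆ principal ideal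
    rintro X ⟨hXflat, hXall⟩
    refine ⟨hXflat, ?_⟩
    set W : Set ι := A.supp X with hWdef
    have hXsub : ∀ i ∈ W, ∀ x ∈ X, A.val i x = 0 := fun i hi x hx => hi hx
    set P : Set (EuclideanSpace ℝ (Fin n)) :=
      {x | ∀ i ∈ W, 0 ≤ (σ i : ℝ) * A.val i x} with hPdef
    have hxCP : x_C ∈ P := fun i _ => hxCw i
    have hPle : infDist x₀ P ≤ dist x₀ x_C := infDist_le_dist_of_mem hxCP
    rcases lt_or_eq_of_le hPle with hPlt | hPeq
    · exfalso
      obtain ⟨p, hpP, hpd⟩ := (Metric.infDist_lt_iff ⟨x_C, hxCP⟩).1 hPlt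
      set w1 : EuclideanSpace ℝ (Fin n) := xw - p with hw1def
      set t₀ : ℝ := min 1 ((dist x₀ x_C - dist x₀ p) / (2 * (‖w1‖ + 1))) with ht₀def
      have ht₀pos : 0 < t₀ := by
        apply lt_min one_pos
        have : 0 < dist x₀ x_C - dist x₀ p := by linarith
        positivity
      have ht₀le1 : t₀ ≤ 1 := min_le_left _ _
      set q : EuclideanSpace ℝ (Fin n) := p + t₀ • w1 with hqdef
      have hqW : ∀ i ∈ W, 0 < (σ i : ℝ) * A.val i q := by
        intro i hiW
        have hcomb : (σ i : ℝ) * A.val i q =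
            (1 - t₀) * ((σ i : ℝ) * A.val i p) + t₀ * ((σ i : ℝ) * A.val i xw) := by
          rw [hqdef, A.val_add_smul, A.inner_eq_val_sub]; ring
        rw [hcomb]
        have h1 := hpP i hiW
        have h2 := hxw_pos i
        nlinarith
      have hqd : dist x₀ q < dist x₀ x_C := by
        have htri : dist x₀ q ≤ dist x₀ p + dist p q := dist_triangle _ _ _
        have hd1 : dist p q = t₀ * ‖w1‖ := by
          rw [hqdef, dist_eq_norm]
          have he : p - (p + t₀ • w1) = -(t₀ • w1) := by abel
          rw [he, norm_neg, norm_smul, Real.norm_eq_abs, abs_of_pos ht₀pos]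
        have h2 : t₀ * ‖w1‖ ≤ (dist x₀ x_C - dist x₀ p) / (2 * (‖w1‖ + 1)) * ‖w1‖ :=
          mul_le_mul_of_nonneg_right (min_le_right _ _) (norm_nonneg _)
        have h3 : (dist x₀ x_C - dist x₀ p) / (2 * (‖w1‖ + 1)) * ‖w1‖ <
            dist x₀ x_C - dist x₀ p := div_bound (by linarith) (norm_nonneg _)
        linarith
      obtain ⟨r₁, r₁pos, hr₁⟩ := A.ball_pos W σ q hqW
      obtain ⟨ε₂, ε₂pos, hfin₂⟩ := A.locFin q
      set r₂ : ℝ := min (min r₁ (dist x₀ x_C - dist x₀ q)) ε₂ with hr₂def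
      have hr₂pos : 0 < r₂ := lt_min (lt_min r₁pos (by linarith)) ε₂pos
      obtain ⟨y, hymem, hyball⟩ := (A.dense_ne _ hfin₂).exists_mem_open Metric.isOpen_ball
        ⟨q, Metric.mem_ball_self hr₂pos⟩
      have hyball' : y ∈ Metric.ball q r₂ := hyball
      have hyne : ∀ i, A.val i y ≠ 0 := by
        intro i
        by_cases hiI : i ∈ {i : ι | ∃ z ∈ Metric.ball q ε₂, (inner ℝ (A.a i) z : ℝ) = A.b i}
        · exact hymem i hiI
        · intro h0
          apply hiI
          refine ⟨y, ?_, ?_⟩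
          · exact Metric.ball_subset_ball (min_le_right _ _) hyball'
          · simpa [Arrangement.val, sub_eq_zero] using h0
      set C' : Set (EuclideanSpace ℝ (Fin n)) := closure (A.openCell (A.signAt y))
        with hC'def
      have hC' : A.IsChamber C' := ⟨y, hyne, rfl⟩
      have hyC' : y ∈ C' := subset_closure (fun i => rfl)
      have hC'lt : infDist x₀ C' < dist x₀ x_C := by
        have h1 : infDist x₀ C' ≤ dist x₀ y := infDist_le_dist_of_mem hyC'
        have h2 : dist x₀ y ≤ dist x₀ q + dist q y := dist_triangle _ _ _
        have h3 : dist q y < r₂ := by rw [dist_comm]; exact hyball'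
        have h4 : r₂ ≤ dist x₀ x_C - dist x₀ q := (min_le_left _ _).trans (min_le_right _ _)
        linarith
      have hCC' : C ≠ C' := by
        intro h; rw [← h, hdC] at hC'lt; exact lt_irrefl _ hC'lt
      have hltC' : lt C' C := by
        rcases hord.1 C' C hC' hC (Ne.symm hCC') with h | h
        · exact h
        · exfalso
          have h5 := hcomp C C' hC hC' h
          rw [hdC] at h5
          linarith
      obtain ⟨i, hiW, hisep⟩ := hXall C' hC' hltC'
      have hy_pos : ∀ j, 0 < (A.signAt y j : ℝ) * A.val j y :=
        fun j => sign_mul_self_pos (hyne j)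
      have hopp : (A.signAt y i : ℝ) = -(σ i : ℝ) := by
        rw [hCeq, hC'def] at hisep
        exact (A.sep_char xw y hxw_pos hy_pos i).1 hisep
      have hstrict : 0 < (σ i : ℝ) * A.val i y := by
        apply hr₁ y _ i hiW
        exact Metric.ball_subset_ball ((min_le_left _ _).trans (min_le_left _ _)) hyball'
      have h2 := hy_pos i
      rw [hopp, neg_mul] at h2
      linarith
    · -- infDist to P equals d: use the flats comparison
      have hPq : ∀ q ∈ P, dist x₀ x_C ≤ dist x₀ q := by
        intro q hq; rw [← hPeq]; exact infDist_le_dist_of_mem hq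
      have hperp : ∀ u : EuclideanSpace ℝ (Fin n),
          (∀ i, i ∈ W → i ∈ Z → (inner ℝ (A.a i) u : ℝ) = 0) →
          (inner ℝ (x₀ - x_C) u : ℝ) ≤ 0 := by
        intro u hu
        obtain ⟨r, rpos, hr⟩ := A.ball_pos (W \ Z) σ x_C (fun i hi => hZpos i hi.2)
        set δ : ℝ := r / (2 * (‖u‖ + 1)) with hδdef
        have hδpos : 0 < δ := by positivity
        apply var_ineq hδpos
        intro t ht0 htδ
        have hmem : x_C + t • u ∈ P := by
          intro i hiW
          by_cases hiZ : i ∈ Z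
          · have h0 : A.val i x_C = 0 := hiZ
            have h1 : A.val i (x_C + t • u) = 0 := by
              rw [A.val_add_smul, hu i hiW hiZ, h0]; ring
            rw [h1, mul_zero]
          · have hball : x_C + t • u ∈ Metric.ball x_C r := by
              rw [Metric.mem_ball, dist_eq_norm]
              have he : x_C + t • u - x_C = t • u := by abel
              rw [he, norm_smul, Real.norm_eq_abs, abs_of_pos ht0]
              have h1 : t * ‖u‖ ≤ δ * ‖u‖ :=
                mul_le_mul_of_nonneg_right htδ (norm_nonneg _)
              have h2 : δ * ‖u‖ < r := by rw [hδdef]; exact div_bound rpos (norm_nonneg _)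
              linarith
            exact le_of_lt (hr _ hball i ⟨hiW, hiZ⟩)
        have h1 := hPq _ hmem
        rw [dist_eq_norm, dist_eq_norm] at h1
        have he : x₀ - (x_C + t • u) = x₀ - x_C - t • u := by abel
        rw [he] at h1
        exact h1
      have hperp0 : ∀ u : EuclideanSpace ℝ (Fin n),
          (∀ i, i ∈ W → i ∈ Z → (inner ℝ (A.a i) u : ℝ) = 0) →
          (inner ℝ (x₀ - x_C) u : ℝ) = 0 := by
        intro u hu
        have h1 := hperp u hu
        have h2 := hperp (-u) (fun i h3 h4 => by rw [inner_neg_right, hu i h3 h4, neg_zero])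
        rw [inner_neg_right] at h2
        linarith
      set L : Set (EuclideanSpace ℝ (Fin n)) :=
        {x | ∀ i, i ∈ W → i ∈ Z → A.val i x = 0} with hLdef
      have hxCL : x_C ∈ L := fun i _ hiZ => hiZ
      have hLdist : ∀ q ∈ L, dist x₀ x_C ≤ dist x₀ q := by
        intro q hq
        have hin : (inner ℝ (x₀ - x_C) (q - x_C) : ℝ) = 0 := by
          apply hperp0
          intro i h1 h2
          rw [A.inner_eq_val_sub, hq i h1 h2]
          have h0 : A.val i x_C = 0 := h2
          rw [h0]; ring
        rw [dist_eq_norm, dist_eq_norm]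
        apply norm_le_of_sq (norm_nonneg _) (norm_nonneg _)
        have he : x₀ - q = x₀ - x_C - (q - x_C) := by abel
        have hrhs : ‖x₀ - x_C - (q - x_C)‖ ^ 2 = ‖x₀ - x_C‖ ^ 2 -
            2 * (inner ℝ (x₀ - x_C) (q - x_C) : ℝ) + ‖q - x_C‖ ^ 2 := norm_sub_sq_real _ _
        rw [he, hrhs, hin]
        nlinarith [sq_nonneg ‖q - x_C‖]
      have hXCL : {x : EuclideanSpace ℝ (Fin n) | ∀ i ∈ Z, A.val i x = 0} ⊆ L :=
        fun x hx i _ hiZ => hx i hiZ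
      rcases hXCL.ssubset_or_eq with hss | heq
      · exfalso
        have hflatL : A.IsFlat L := by
          refine ⟨⟨x_C, hxCL⟩, ⟨{i | i ∈ W ∧ i ∈ Z}, ?_⟩⟩
          ext x
          simp only [Set.mem_iInter]
          constructor
          · intro hx i hi; exact hx i hi.1 hi.2
          · intro hx i h1 h2; exact hx i ⟨h1, h2⟩
        have hflatXC : A.IsFlat {x : EuclideanSpace ℝ (Fin n) | ∀ i ∈ Z, A.val i x = 0} := by
          refine ⟨⟨x_C, fun i hi => hi⟩, ⟨Z, ?_⟩⟩
          ext x
          simp only [Set.mem_iInter]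
          exact Iff.rfl
        have hcontra := hgen.2 L _ hflatL hflatXC hss
        have h1 : dist x₀ x_C ≤ infDist x₀ L := le_infDist' ⟨x_C, hxCL⟩ hLdist
        have h2 : infDist x₀ {x : EuclideanSpace ℝ (Fin n) | ∀ i ∈ Z, A.val i x = 0} ≤
            dist x₀ x_C := infDist_le_dist_of_mem (fun i hi => hi)
        linarith
      · have hXL : X ⊆ L := fun x hx i hiW _ => hXsub i hiW x hx
        rw [← heq] at hXL
        exact hXL.trans hspan_sup
  · -- principal ideal ⊆ J(C)
    rintro X ⟨hXflat, hXspan⟩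
    refine ⟨hXflat, ?_⟩
    intro C' hC' hltC'
    obtain ⟨xw', hxw'_ne, hC'eq⟩ := id hC'
    set σ' : ι → SignType := A.signAt xw' with hσ'def
    have hxw'_pos : ∀ i, 0 < (σ' i : ℝ) * A.val i xw' := fun i => sign_mul_self_pos (hxw'_ne i)
    have hσ'ne : ∀ i, σ' i ≠ 0 := by
      intro i h0
      have := hxw'_pos i; rw [h0] at this; simp at this
    have hC'set : C' = {z | ∀ i, 0 ≤ (σ' i : ℝ) * A.val i z} := by
      rw [hC'eq]; exact A.cell_closure xw' hxw'_pos
    by_contra hempty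
    rw [Set.not_nonempty_iff_eq_empty] at hempty
    have hnotsep : ∀ i, i ∈ A.supp X → i ∉ A.sep C C' := by
      intro i h1 h2
      have : i ∈ A.supp X ∩ A.sep C C' := ⟨h1, h2⟩
      rw [hempty] at this
      exact this
    have hsuppZ : ∀ i ∈ Z, i ∈ A.supp X := by
      intro i hiZ x hxX
      exact hspan_sub (hXspan hxX) i hiZ
    have hsame : ∀ i ∈ Z, (σ' i : ℝ) = (σ i : ℝ) := by
      intro i hiZ
      apply st_eq_of_not_opp (hσne i) (hσ'ne i)
      intro hopp
      apply hnotsep i (hsuppZ i hiZ)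
      rw [hCeq, hC'eq]
      exact (A.sep_char xw xw' hxw_pos hxw'_pos i).2 hopp
    have hC'q : ∀ q ∈ C', dist x₀ x_C ≤ dist x₀ q := by
      intro q hq
      apply hK
      intro i hiZ
      rw [hC'set] at hq
      have h1 := hq i
      rw [hsame i hiZ] at h1
      exact h1
    have hC'ne : C'.Nonempty := ⟨xw', hC'eq ▸ subset_closure (fun i => rfl)⟩
    have hdC' : infDist x₀ C' = dist x₀ x_C := by
      apply le_antisymm
      · calc infDist x₀ C' ≤ infDist x₀ C := hcomp C' C hC' hC hltC'
          _ = dist x₀ x_C := hdC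
      · exact le_infDist' hC'ne hC'q
    have hC'closed : IsClosed C' := hC'eq ▸ isClosed_closure
    obtain ⟨p', hp'mem, hp'dist⟩ := hC'closed.exists_infDist_eq_dist hC'ne x₀
    have hp'min : ∀ q ∈ C', dist x₀ p' ≤ dist x₀ q := by
      intro q hq; rw [← hp'dist]; exact infDist_le_dist_of_mem hq
    have hgen1 := hgen.1 C C' hC hC' (by rw [hdC, hdC']) x_C hxC p' hp'mem hmin hp'min
    have hxC_C' : x_C ∈ C' := hgen1.2.2
    have hCne : C ≠ C' := by
      intro h; rw [h] at hltC'; exact hord.2.1 C' hltC'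
    have hjex : ∃ j, σ j ≠ σ' j := by
      by_contra hall
      push_neg at hall
      apply hCne
      rw [hCeq, hC'eq]
      have hfe : σ = σ' := funext hall
      rw [hfe]
    obtain ⟨j, hj⟩ := hjex
    have hjopp : (σ' j : ℝ) = -(σ j : ℝ) := by
      by_contra hno
      exact hj (st_inj (st_eq_of_not_opp (hσne j) (hσ'ne j) hno)).symm
    have hjZ : j ∉ Z := by
      intro hjZ
      rw [hsame j hjZ] at hjopp
      have h0 : (σ j : ℝ) = 0 := by linarith
      exact st_ne_zero (hσne j) h0
    have h1 := hZpos j hjZ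
    have h2 : 0 ≤ (σ' j : ℝ) * A.val j x_C := by
      rw [hC'set] at hxC_C'
      exact hxC_C' j
    rw [hjopp, neg_mul] at h2
    linarith
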